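/- Let T>0, a,b>0, θ>1 be real numbers, and let X:[0,T]→[0,∞) be continuous with X(t) ≤ a + b·X(t)^θ for all t∈[0,T]. If a < (1 - 1/θ)·(θb)^{1/(1-θ)} and X(0) ≤ (θb)^{1/(1-θ)}, then X(t) ≤ (θ/(θ-1))·a for all t∈[0,T]. -/

import Mathlib

open Set

/-- Abstract bootstrap/absorption lemma. -/
theorem stmt0 (T a b θ : ℝ) (hT : 0 < T) (ha : 0 < a) (hb : 0 < b) (hθ : 1 < θ)
    (X : ℝ → ℝ) (hXc : ContinuousOn X (Icc 0 T))
    (hXnonneg : ∀ t ∈ Icc (0:ℝ) T, 0 ≤ X t)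
    (hXle : ∀ t ∈ Icc (0:ℝ) T, X t ≤ a + b * X t ^ θ)
    (hsmall : a < (1 - 1/θ) * (θ * b) ^ (1/(1-θ)))
    (hinit : X 0 ≤ (θ * b) ^ (1/(1-θ))) :
    ∀ t ∈ Icc (0:ℝ) T, X t ≤ θ/(θ-1) * a := by
  set M := (θ * b) ^ (1/(1-θ)) with hM
  set K := θ/(θ-1) * a with hK
  have hθ1 : 0 < θ - 1 := by linarith
  have hθ0 : 0 < θ := by linarith
  have hθb : 0 < θ * b := by positivity
  have hMpos : 0 < M := Real.rpow_pos_of_pos hθb _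
  have h1θ : (1:ℝ) - θ ≠ 0 := by intro h; linarith
  have hMpow : M ^ (θ - 1) = (θ * b)⁻¹ := by
    rw [hM, ← Real.rpow_mul hθb.le]
    rw [show (1/(1-θ)) * (θ-1) = -1 by field_simp; ring]
    exact Real.rpow_neg_one _
  have hbM : b * M ^ (θ - 1) = 1/θ := by
    rw [hMpow]; field_simp
  have hKpos : 0 < K := mul_pos (div_pos hθ0 hθ1) ha
  have hKM : K < M := by
    have h1 : (1 - 1/θ) * M = (θ-1) * M / θ := by field_simp
    rw [h1, lt_div_iff₀ hθ0] at hsmall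
    rw [hK, div_mul_eq_mul_div, div_lt_iff₀ hθ1]
    nlinarith
  -- Key: no value in (K, M] satisfies x ≤ a + b x^θ
  have key : ∀ x : ℝ, K < x → x ≤ M → a + b * x ^ θ < x := by
    intro x hxK hxM
    have hx0 : 0 < x := lt_trans hKpos hxK
    have hxθ : x ^ θ = x ^ (θ-1) * x := by
      rw [show θ = (θ-1) + 1 by ring, Real.rpow_add hx0, Real.rpow_one]
      ring_nf
    have hle : x ^ (θ-1) ≤ M ^ (θ-1) :=
      Real.rpow_le_rpow hx0.le hxM (by linarith)
    have hbx : b * x ^ (θ-1) ≤ 1/θ := by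
      calc b * x ^ (θ-1) ≤ b * M ^ (θ-1) := by nlinarith
        _ = 1/θ := hbM
    have h2 : b * x ^ θ ≤ (1/θ) * x := by
      rw [hxθ, ← mul_assoc]
      exact mul_le_mul_of_nonneg_right hbx hx0.le
    have hKa : K * (θ-1) = θ * a := by
      rw [hK]; field_simp
    have hθinv : (1/θ) * θ = 1 := by field_simp
    nlinarith [mul_pos hθ1 (sub_pos.mpr hxK)]
  -- dichotomy
  have dich : ∀ t ∈ Icc (0:ℝ) T, X t ≤ K ∨ M < X t := by
    intro t ht
    by_contra h
    push_neg at h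
    exact absurd (hXle t ht) (not_le.mpr (key (X t) h.1 h.2))
  have h0 : (0:ℝ) ∈ Icc (0:ℝ) T := ⟨le_refl 0, hT.le⟩
  have hX0 : X 0 ≤ K := by
    rcases dich 0 h0 with h | h
    · exact h
    · exact absurd hinit (not_le.mpr h)
  intro t ht
  rcases dich t ht with h | h
  · exact h
  · exfalso
    set c := (K + M) / 2 with hc
    have hcK : K < c := by rw [hc]; linarith
    have hcM : c < M := by rw [hc]; linarith
    have hsub : Icc (0:ℝ) t ⊆ Icc 0 T := Icc_subset_Icc_right ht.2
    have hiv := intermediate_value_Icc ht.1 (hXc.mono hsub)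
    have hcmem : c ∈ Icc (X 0) (X t) := ⟨by linarith, by linarith⟩
    obtain ⟨s, hs, hXs⟩ := hiv hcmem
    rcases dich s (hsub hs) with h' | h'
    · rw [hXs] at h'; linarith
    · rw [hXs] at h'; linarith
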